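/- Let q, d ≥ 3, β > 0, and let x ∈ (1/q, 1) satisfy the ferromagnetic BP fixed-point equation. Then (e^β - 1)·(1-x)/(q-1) < 1/(d-2). -/

import Mathlib

lemma aux_pow_lin_lt (t : ℝ) (ht : 1 < t) (n : ℕ) (hn : 2 ≤ n) :
    ((n:ℝ)-1)*(t-1) < t^n - t := by
  induction n, hn using Nat.le_induction with
  | base =>
    push_cast
    nlinarith [mul_pos (sub_pos.mpr ht) (sub_pos.mpr ht)]
  | succ m hm ih =>
    have h1 : (1:ℝ) ≤ t ^ m := one_le_pow₀ ht.le
    have h2 : (1:ℝ)*(t-1) ≤ t^m*(t-1) :=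
      mul_le_mul_of_nonneg_right h1 (le_of_lt (sub_pos.mpr ht))
    push_cast
    push_cast at ih
    rw [pow_succ]
    nlinarith

/-- The non-dominant colour classes of the ferromagnetic BP fixed point
percolate subcritically: (e^β - 1)·(1-x)/(q-1) < 1/(d-2). -/
theorem nondominant_subcritical_bp (q d : ℕ) (hq : 3 ≤ q) (hd : 3 ≤ d)
    (β x : ℝ) (hβ : 0 < β) (hx : x ∈ Set.Ioo (1/(q:ℝ)) 1)
    (hfix : x = (1+(Real.exp β-1)*x)^(d-1) /
      ((1+(Real.exp β-1)*x)^(d-1)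
        + ((q:ℝ)-1)*(1+(Real.exp β-1)*(1-x)/((q:ℝ)-1))^(d-1))) :
    (Real.exp β - 1)*(1-x)/((q:ℝ)-1) < 1/((d:ℝ)-2) := by
  obtain ⟨hx1, hx2⟩ := hx
  have hq0 : (0:ℝ) < q := by positivity
  have hqR : (3:ℝ) ≤ (q:ℝ) := by exact_mod_cast hq
  have hq1pos : (0:ℝ) < (q:ℝ) - 1 := by linarith
  have hqne : ((q:ℝ) - 1) ≠ 0 := ne_of_gt hq1pos
  set c := Real.exp β - 1 with hc
  have hc0 : 0 < c := by
    have : (1:ℝ) < Real.exp β := by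
      calc (1:ℝ) = Real.exp 0 := Real.exp_zero.symm
        _ < Real.exp β := Real.exp_lt_exp.mpr hβ
    simp [hc]; linarith
  set n := d - 1 with hn
  have hn2 : 2 ≤ n := by omega
  have hncast : (n:ℝ) = (d:ℝ) - 1 := by
    rw [hn]; push_cast [Nat.cast_sub (by omega : 1 ≤ d)]; ring
  set A := 1 + c * x with hA
  set B := 1 + c * (1-x) / ((q:ℝ)-1) with hB
  have h1 : A - 1 = c * x := by rw [hA]; ring
  have h2 : B - 1 = c * (1-x) / ((q:ℝ)-1) := by rw [hB]; ring
  have hx0 : 0 < x := lt_trans (by positivity) hx1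
  have h1x : 0 < 1 - x := by linarith
  have hA0 : 0 < A := by rw [hA]; nlinarith
  have hB1 : 1 < B := by
    rw [hB]
    have : 0 < c * (1-x) / ((q:ℝ)-1) := div_pos (mul_pos hc0 h1x) hq1pos
    linarith
  have hB0 : 0 < B := by linarith
  have hBne : B ≠ 0 := ne_of_gt hB0
  have hAB : B < A := by
    have hxq : 1 < x * q := (div_lt_iff₀ hq0).mp hx1
    have : c * (1-x) / ((q:ℝ)-1) < c * x := by
      rw [div_lt_iff₀ hq1pos]
      nlinarith
    rw [hA, hB]; linarith
  -- clear the denominator in the fixed point equation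
  have hD : 0 < A ^ n + ((q:ℝ)-1) * B ^ n := by positivity
  rw [eq_div_iff (ne_of_gt hD)] at hfix
  -- the key symmetric equation
  have hEq : (A - 1) * B ^ n = (B - 1) * A ^ n := by
    rw [h1, h2, div_mul_eq_mul_div, eq_div_iff hqne]
    linear_combination c * hfix
  set t := A / B with htdef
  have ht : 1 < t := (one_lt_div hB0).mpr hAB
  have hA_t : t * B = A := div_mul_cancel₀ A hBne
  have htn : t ^ n = A ^ n / B ^ n := div_pow A B n
  have heq2 : (B - 1) * t ^ n = A - 1 := by
    rw [htn, mul_div_assoc', div_eq_iff (pow_ne_zero n hBne)]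
    linear_combination -hEq
  have heq3 : (B - 1) * (t ^ n - t) = t - 1 := by
    linear_combination heq2 - hA_t
  have hkey : ((n:ℝ)-1)*(t-1) < t^n - t := aux_pow_lin_lt t ht n hn2
  have htpos : 0 < t ^ n - t := by nlinarith [sub_pos.mpr ht]
  have hn1pos : (0:ℝ) < (n:ℝ) - 1 := by
    have : (2:ℝ) ≤ (n:ℝ) := by exact_mod_cast hn2
    linarith
  have h5 : (B - 1) * ((n:ℝ)-1) * (t ^ n - t) = ((n:ℝ)-1)*(t-1) := by
    linear_combination ((n:ℝ)-1) * heq3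
  have h6 : (B - 1) * ((n:ℝ)-1) < 1 := by
    have h7 : (B - 1) * ((n:ℝ)-1) * (t ^ n - t) < 1 * (t ^ n - t) := by
      rw [h5, one_mul]; exact hkey
    exact (mul_lt_mul_iff_of_pos_right htpos).mp h7
  have hcast : (d:ℝ) - 2 = (n:ℝ) - 1 := by rw [hncast]; ring
  rw [← h2, hcast, lt_div_iff₀ hn1pos]
  exact h6
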